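/- Let λ ∈ ℝᵏ with λ₁ ≥ λ₂ ≥ ⋯ ≥ λₖ ≥ 0 and let t be an integer with 0 < t ≤ k. Then there exists a unique integer ι with 0 ≤ ι < t such that λ_ι > (1/(t-ι)) · Σ_{ℓ=ι+1}^{k} λ_ℓ ≥ λ_{ι+1}, with the convention λ₀ = +∞. -/

import Mathlib

theorem stmt_1 (k t : ℕ) (lam : Fin k → ℝ)
    (ht : 0 < t) (htk : t ≤ k)
    (hsort : ∀ i j : Fin k, i ≤ j → lam j ≤ lam i)
    (hnn : ∀ i, 0 ≤ lam i) :
    ∃! ι : ℕ, ∃ hι : ι < t,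
      (∀ _ : 0 < ι,
        (∑ ℓ : Fin k, if ι ≤ (ℓ : ℕ) then lam ℓ else 0) / ((t : ℝ) - ι)
          < lam ⟨ι - 1, by omega⟩) ∧
      lam ⟨ι, by omega⟩ ≤
        (∑ ℓ : Fin k, if ι ≤ (ℓ : ℕ) then lam ℓ else 0) / ((t : ℝ) - ι) := by
  classical
  set S : ℕ → ℝ := fun ι => ∑ ℓ : Fin k, if ι ≤ (ℓ : ℕ) then lam ℓ else 0 with hSdef
  set g : ℕ → ℝ := fun i => if h : i < k then lam ⟨i, h⟩ else 0 with hgdef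
  have hg : ∀ i (h : i < k), g i = lam ⟨i, h⟩ := by
    intro i h; simp [hgdef, h]
  have hgmono : ∀ i j, i ≤ j → j < k → g j ≤ g i := by
    intro i j hij hj
    rw [hg i (lt_of_le_of_lt hij hj), hg j hj]
    exact hsort _ _ (by simpa [Fin.mk_le_mk] using hij)
  have hSnn : ∀ ι, 0 ≤ S ι := by
    intro ι
    apply Finset.sum_nonneg
    intro ℓ _
    split
    · exact hnn ℓ
    · exact le_refl 0
  have hSrec : ∀ ι, ι < k → S ι = g ι + S (ι + 1) := by
    intro ι h
    have key : ∀ ℓ : Fin k, (if ι ≤ (ℓ : ℕ) then lam ℓ else 0)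
        = (if ℓ = ⟨ι, h⟩ then lam ℓ else 0) + (if ι + 1 ≤ (ℓ : ℕ) then lam ℓ else 0) := by
      intro ℓ
      rcases lt_trichotomy (ℓ : ℕ) ι with hl | hl | hl
      · rw [if_neg (by omega), if_neg (by simp [Fin.ext_iff]; omega), if_neg (by omega)]; ring
      · rw [if_pos (by omega), if_pos (Fin.ext hl), if_neg (by omega)]; ring
      · rw [if_pos (by omega), if_neg (by simp [Fin.ext_iff]; omega), if_pos (by omega)]; ring
    calc S ι = ∑ ℓ : Fin k, ((if ℓ = ⟨ι, h⟩ then lam ℓ else 0)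
          + (if ι + 1 ≤ (ℓ : ℕ) then lam ℓ else 0)) := Finset.sum_congr rfl (fun ℓ _ => key ℓ)
      _ = g ι + S (ι + 1) := by
          rw [Finset.sum_add_distrib, Finset.sum_ite_eq' Finset.univ ⟨ι, h⟩ (fun ℓ => lam ℓ)]
          simp [hg ι h]
          rfl
  -- the predicate
  set Q : ℕ → Prop := fun ι => ι < t ∧ ((t : ℝ) - ι) * g ι ≤ S ι with hQdef
  have hex : ∃ ι, Q ι := by
    refine ⟨t - 1, by omega, ?_⟩
    have h1 : t - 1 < k := by omega
    have hcast : ((t - 1 : ℕ) : ℝ) = (t : ℝ) - 1 := by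
      push_cast [Nat.cast_sub ht]; ring
    rw [hcast, hSrec _ h1]
    have := hSnn t
    nlinarith [hSnn ((t-1)+1), hg (t-1) h1]
  obtain ⟨ι, ⟨hιt, hQι⟩, hmin⟩ : ∃ ι, Q ι ∧ ∀ j, j < ι → ¬ Q j :=
    ⟨Nat.find hex, Nat.find_spec hex, fun j hj => Nat.find_min hex hj⟩
  have hιk : ι < k := by omega
  have htι : (0 : ℝ) < (t : ℝ) - ι := by
    have : (ι : ℝ) < t := by exact_mod_cast hιt
    linarith
  -- the monotone chain lemma
  have chain : ∀ j, ι ≤ j → j < t → ((t : ℝ) - j) * g j ≤ S j := by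
    intro j hj
    induction j, hj using Nat.le_induction with
    | base => intro _; exact hQι
    | succ n hn ih =>
        intro h2
        have hn2 := ih (by omega)
        have hnk : n < k := by omega
        have hrec := hSrec n hnk
        have hstep : ((t : ℝ) - ((n:ℝ)+1)) * g n ≤ S (n+1) := by
          rw [hrec] at hn2; nlinarith
        have hmon : g (n+1) ≤ g n := hgmono n (n+1) (by omega) (by omega)
        have hpos : (0:ℝ) ≤ (t : ℝ) - ((n:ℝ)+1) := by
          have : ((n:ℝ)+1) < t := by exact_mod_cast h2
          linarith
        push_cast
        nlinarith [hstep, hmon, hpos]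
  refine ⟨ι, ⟨hιt, ?_, ?_⟩, ?_⟩
  · -- first part: for 0 < ι
    intro hpos
    have hnotQ := hmin (ι - 1) (by omega)
    simp only [hQdef] at hnotQ
    push_neg at hnotQ
    have hlt : S (ι - 1) < ((t : ℝ) - (ι - 1 : ℕ)) * g (ι - 1) := hnotQ (by omega)
    have hι1k : ι - 1 < k := by omega
    have hrec := hSrec (ι - 1) hι1k
    have hι1 : ι - 1 + 1 = ι := by omega
    rw [hι1] at hrec
    have hcast : ((ι - 1 : ℕ) : ℝ) = (ι : ℝ) - 1 := by
      push_cast [Nat.cast_sub hpos]; ring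
    rw [hcast, hrec] at hlt
    have hkey : S ι < g (ι - 1) * ((t : ℝ) - ι) := by nlinarith
    have hfin := (div_lt_iff₀ htι).mpr hkey
    rw [hg (ι-1) hι1k] at hfin
    exact hfin
  · -- second part
    have hfin : g ι ≤ S ι / ((t : ℝ) - ι) := (le_div_iff₀ htι).mpr (by nlinarith [hQι])
    rw [hg ι hιk] at hfin
    exact hfin
  · -- uniqueness
    intro y ⟨hyt, hy1, hy2⟩
    by_contra hne
    rcases Nat.lt_or_ge y ι with hlt | hge
    · -- y < ι contradicts minimality: y satisfies Q
      refine hmin y hlt ⟨hyt, ?_⟩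
      have hyk : y < k := by omega
      have hty : (0:ℝ) < (t : ℝ) - y := by
        have : (y : ℝ) < t := by exact_mod_cast hyt
        linarith
      have hy2' : lam ⟨y, hyk⟩ ≤ S y / ((t : ℝ) - y) := hy2
      rw [hg y hyk]
      have := (le_div_iff₀ hty).mp hy2'
      linarith
    · have hgt : ι < y := by omega
      have hypos : 0 < y := by omega
      have h1 := hy1 hypos
      -- chain at y - 1
      have hc := chain (y - 1) (by omega) (by omega)
      have hy1k : y - 1 < k := by omega
      have hrec := hSrec (y - 1) hy1k
      have hy11 : y - 1 + 1 = y := by omega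
      rw [hy11] at hrec
      have hcast : ((y - 1 : ℕ) : ℝ) = (y : ℝ) - 1 := by
        push_cast [Nat.cast_sub hypos]; ring
      rw [hcast, hrec] at hc
      have hty : (0:ℝ) < (t : ℝ) - y := by
        have : (y : ℝ) < t := by exact_mod_cast hyt
        linarith
      have hle : ((t:ℝ) - y) * g (y-1) ≤ S y := by nlinarith
      have hle2 : g (y - 1) ≤ S y / ((t:ℝ) - y) := (le_div_iff₀ hty).mpr (by nlinarith)
      rw [hg (y-1) hy1k] at hle2
      exact absurd h1 (not_lt.mpr hle2)
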